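/- arXiv:2405.13798 — 4 statements merged into one kernel-verified Lean document; each statement's English description precedes it below -/
import Mathlib

section
/- Let (Ω, F, P) be a probability space with a filtration (F_n)_{n≥1} (set F_0 to be the trivial σ-algebra), and let (Z_n)_{n≥1} be a sequence of real-valued random variables such that Z_n is F_n-measurable and |Z_n| ≤ G almost surely for a fixed constant G < ∞. Define μ_n = E[Z_n | F_{n−1}] and S_n = Σ_{m=1}^n Z_m. If the averaged conditional means (1/n) Σ_{m=1}^n μ_m converge in probability to a random variable μ, then (1/n) S_n converges in probability to μ: for every ε > 0, lim_{n→∞} P(|(1/n) S_n − μ| > ε) = 0. -/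
open MeasureTheory Filter Finset

/-- **A Weak Law of Large Numbers** for bounded adapted sequences with arbitrary dependence.
Let `(Ω, F, P)` be a probability space with filtration `(F_n)` (with `F_0` trivial), and
`(Z_n)_{n ≥ 1}` real random variables with `Z_n` being `F_n`-measurable and `|Z_n| ≤ G` a.s.,
and let `μ_n = E[Z_n | F_{n-1}]`, `S_n = ∑_{m=1}^n Z_m`. If the averaged conditional means
`(1/n) ∑_{m=1}^n μ_m` converge in probability to a random variable `μlim`, then
`(1/n) S_n` converges in probability to `μlim`. -/
theorem weak_law_of_large_numbers_dependent
    {Ω : Type*} {m0 : MeasurableSpace Ω} (μ : Measure Ω) [IsProbabilityMeasure μ]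
    (ℱ : Filtration ℕ m0) (hℱ0 : ℱ 0 = ⊥)
    (Z : ℕ → Ω → ℝ) (G : ℝ)
    (hmeas : ∀ n, 1 ≤ n → StronglyMeasurable[ℱ n] (Z n))
    (hbdd : ∀ n, 1 ≤ n → ∀ᵐ ω ∂μ, |Z n ω| ≤ G)
    (μ' : ℕ → Ω → ℝ) (hμ' : ∀ n, μ' n = μ[Z n | ℱ (n - 1)])
    (μlim : Ω → ℝ)
    (hconv : ∀ ε : ℝ, 0 < ε →
      Tendsto (fun n : ℕ => μ {ω | ε < |(1 / (n : ℝ)) * ∑ m ∈ Icc 1 n, μ' m ω - μlim ω|})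
        atTop (nhds 0)) :
    ∀ ε : ℝ, 0 < ε →
      Tendsto (fun n : ℕ => μ {ω | ε < |(1 / (n : ℝ)) * ∑ m ∈ Icc 1 n, Z m ω - μlim ω|})
        atTop (nhds 0) := by
  intro ε hε
  have hG0 : 0 ≤ G := by
    obtain ⟨ω, hω⟩ := (hbdd 1 le_rfl).exists
    exact (abs_nonneg _).trans hω
  -- basic facts about Z and μ'
  have hZint : ∀ n, 1 ≤ n → Integrable (Z n) μ := by
    intro n hn
    refine ⟨((hmeas n hn).mono (ℱ.le n)).aestronglyMeasurable, ?_⟩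
    refine HasFiniteIntegral.of_bounded (C := G) ?_
    filter_upwards [hbdd n hn] with ω hω using by simpa [Real.norm_eq_abs] using hω
  have hμ'int : ∀ n, Integrable (μ' n) μ := fun n => (hμ' n) ▸ integrable_condExp
  have hμ'bdd : ∀ n, 1 ≤ n → ∀ᵐ ω ∂μ, |μ' n ω| ≤ G := by
    intro n hn
    rw [hμ' n]
    have : (G.toNNReal : ℝ) = G := Real.coe_toNNReal G hG0
    have h := ae_bdd_condExp_of_ae_bdd (m := ℱ (n - 1)) (μ := μ) (R := G.toNNReal)
      (f := Z n) (by filter_upwards [hbdd n hn] with ω hω using by rwa [this])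
    filter_upwards [h] with ω hω using by rwa [this] at hω
  -- the martingale differences
  set X : ℕ → Ω → ℝ := fun n ω => Z n ω - μ' n ω with hX
  have hXmeas : ∀ n, 1 ≤ n → StronglyMeasurable[ℱ n] (X n) := by
    intro n hn
    exact (hmeas n hn).sub ((hμ' n ▸ stronglyMeasurable_condExp).mono (ℱ.mono (Nat.sub_le n 1)))
  have hXbdd : ∀ n, 1 ≤ n → ∀ᵐ ω ∂μ, |X n ω| ≤ 2 * G := by
    intro n hn
    filter_upwards [hbdd n hn, hμ'bdd n hn] with ω h1 h2
    calc |Z n ω - μ' n ω| ≤ |Z n ω| + |μ' n ω| := abs_sub _ _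
      _ ≤ G + G := add_le_add h1 h2
      _ = 2 * G := by ring
  have hXint : ∀ n, 1 ≤ n → Integrable (X n) μ := fun n hn => (hZint n hn).sub (hμ'int n)
  have hXcond : ∀ n, 1 ≤ n → μ[X n | ℱ (n - 1)] =ᵐ[μ] 0 := by
    intro n hn
    refine (condExp_sub (hZint n hn) (hμ'int n) (ℱ (n - 1))).trans ?_
    have h1 : μ[μ' n | ℱ (n - 1)] = μ' n := by
      rw [hμ' n]
      exact condExp_of_stronglyMeasurable (ℱ.le _) stronglyMeasurable_condExp integrable_condExp
    rw [h1, ← hμ' n]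
    filter_upwards with ω
    simp
  -- products are integrable
  have hprodint : ∀ i j, 1 ≤ i → 1 ≤ j → Integrable (fun ω => X i ω * X j ω) μ := by
    intro i j hi hj
    refine ⟨((hXmeas i hi).mono (ℱ.le i)).aestronglyMeasurable.mul
      ((hXmeas j hj).mono (ℱ.le j)).aestronglyMeasurable, ?_⟩
    refine HasFiniteIntegral.of_bounded (C := (2 * G) * (2 * G)) ?_
    filter_upwards [hXbdd i hi, hXbdd j hj] with ω h1 h2
    rw [Real.norm_eq_abs, abs_mul]
    exact mul_le_mul h1 h2 (abs_nonneg _) (by linarith)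
  -- cross terms vanish
  have hcross : ∀ i j, 1 ≤ i → i < j → ∫ ω, X i ω * X j ω ∂μ = 0 := by
    intro i j hi hij
    have hj1 : 1 ≤ j := hi.trans hij.le
    have hle : i ≤ j - 1 := Nat.le_sub_one_of_lt hij
    have hXi : StronglyMeasurable[ℱ (j - 1)] (X i) := (hXmeas i hi).mono (ℱ.mono hle)
    have hpull : μ[(fun ω => X i ω * X j ω) | ℱ (j - 1)]
        =ᵐ[μ] fun ω => X i ω * (μ[X j | ℱ (j - 1)]) ω :=
      condExp_mul_of_stronglyMeasurable_left hXi (hprodint i j hi hj1) (hXint j hj1)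
    have h0 : μ[(fun ω => X i ω * X j ω) | ℱ (j - 1)] =ᵐ[μ] 0 := by
      refine hpull.trans ?_
      filter_upwards [hXcond j hj1] with ω hω
      simp [hω]
    calc ∫ ω, X i ω * X j ω ∂μ
        = ∫ ω, (μ[(fun ω => X i ω * X j ω) | ℱ (j - 1)]) ω ∂μ :=
          (integral_condExp (ℱ.le _)).symm
      _ = 0 := by rw [integral_congr_ae h0]; simp
  -- second moment bound for the partial sums
  have hsum_sq : ∀ n : ℕ, ∫ ω, (∑ m ∈ Icc 1 n, X m ω) ^ 2 ∂μ ≤ n * (2 * G) ^ 2 := by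
    intro n
    have hmem : ∀ i ∈ Icc 1 n, 1 ≤ i := fun i hi => (mem_Icc.mp hi).1
    have hint_pair : ∀ p ∈ Icc 1 n ×ˢ Icc 1 n,
        Integrable (fun ω => X p.1 ω * X p.2 ω) μ := fun p hp =>
      hprodint p.1 p.2 (hmem _ (mem_product.mp hp).1) (hmem _ (mem_product.mp hp).2)
    have hexp : ∫ ω, (∑ m ∈ Icc 1 n, X m ω) ^ 2 ∂μ
        = ∑ p ∈ Icc 1 n ×ˢ Icc 1 n, ∫ ω, X p.1 ω * X p.2 ω ∂μ := by
      rw [← integral_finset_sum _ hint_pair]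
      congr 1
      funext ω
      rw [sq, Finset.sum_mul_sum, Finset.sum_product]
    rw [hexp]
    have hterm : ∀ p ∈ Icc 1 n ×ˢ Icc 1 n,
        ∫ ω, X p.1 ω * X p.2 ω ∂μ ≤ if p.1 = p.2 then (2 * G) ^ 2 else 0 := by
      rintro ⟨i, j⟩ hp
      obtain ⟨hi, hj⟩ := mem_product.mp hp
      have hi1 := hmem _ hi
      have hj1 := hmem _ hj
      by_cases hij : i = j
      · simp only [hij, if_pos rfl]
        have : ∫ ω, X j ω * X j ω ∂μ ≤ ∫ _ω, (2 * G) ^ 2 ∂μ := by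
          refine integral_mono_ae (hprodint j j hj1 hj1) (integrable_const _) ?_
          filter_upwards [hXbdd j hj1] with ω hω
          calc X j ω * X j ω = |X j ω| ^ 2 := by rw [sq_abs, sq]
            _ ≤ (2 * G) ^ 2 := by
                exact pow_le_pow_left₀ (abs_nonneg _) hω 2
        simpa using this
      · simp only [if_neg hij]
        rcases lt_or_gt_of_ne hij with h | h
        · exact le_of_eq (hcross i j hi1 h)
        · rw [show (fun ω => X i ω * X j ω) = fun ω => X j ω * X i ω from
            funext fun ω => mul_comm _ _]
          exact le_of_eq (hcross j i hj1 h)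
    calc ∑ p ∈ Icc 1 n ×ˢ Icc 1 n, ∫ ω, X p.1 ω * X p.2 ω ∂μ
        ≤ ∑ p ∈ Icc 1 n ×ˢ Icc 1 n, if p.1 = p.2 then (2 * G) ^ 2 else 0 :=
          Finset.sum_le_sum hterm
      _ = ∑ i ∈ Icc 1 n, ∑ j ∈ Icc 1 n, if i = j then (2 * G) ^ 2 else 0 := by
          rw [Finset.sum_product]
      _ = ∑ i ∈ Icc 1 n, (2 * G) ^ 2 := by
          refine Finset.sum_congr rfl fun i hi => ?_
          rw [Finset.sum_ite_eq (Icc 1 n) i (fun _ => (2 * G) ^ 2), if_pos hi]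
      _ ≤ n * (2 * G) ^ 2 := by
          rw [Finset.sum_const, Nat.card_Icc, nsmul_eq_mul]
          norm_num
  -- Chebyshev bound for the averaged differences
  set ε' := ε / 2 with hε'def
  have hε'0 : 0 < ε' := by positivity
  have hcheb : ∀ n : ℕ, 1 ≤ n →
      μ {ω | ε' < |(1 / (n : ℝ)) * ∑ m ∈ Icc 1 n, X m ω|}
        ≤ ENNReal.ofReal ((2 * G) ^ 2 / ε' ^ 2 * (1 / n)) := by
    intro n hn
    have hn0 : (0 : ℝ) < n := by exact_mod_cast hn
    set f : Ω → ℝ := fun ω => ((1 / (n : ℝ)) * ∑ m ∈ Icc 1 n, X m ω) ^ 2 with hf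
    have hSint : Integrable (fun ω => (∑ m ∈ Icc 1 n, X m ω) ^ 2) μ := by
      have h1 : (fun ω => (∑ m ∈ Icc 1 n, X m ω) ^ 2)
          = fun ω => ∑ p ∈ Icc 1 n ×ˢ Icc 1 n, X p.1 ω * X p.2 ω := by
        funext ω; rw [sq, Finset.sum_mul_sum, Finset.sum_product]
      rw [h1]
      exact integrable_finset_sum _ fun p hp =>
        hprodint _ _ (mem_Icc.mp (mem_product.mp hp).1).1 (mem_Icc.mp (mem_product.mp hp).2).1
    have hfeq2 : f = fun ω => (1 / (n : ℝ)) ^ 2 * (∑ m ∈ Icc 1 n, X m ω) ^ 2 := by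
      funext ω; simp only [hf, mul_pow]
    have hfint : Integrable f μ := by rw [hfeq2]; exact hSint.const_mul _
    have hmar := mul_meas_ge_le_integral_of_nonneg (μ := μ) (f := f)
      (Eventually.of_forall fun ω => sq_nonneg _) hfint (ε' ^ 2)
    have hint_le : ∫ x, f x ∂μ ≤ (2 * G) ^ 2 * (1 / n) := by
      rw [hfeq2, integral_const_mul]
      calc (1 / (n : ℝ)) ^ 2 * ∫ ω, (∑ m ∈ Icc 1 n, X m ω) ^ 2 ∂μ
          ≤ (1 / (n : ℝ)) ^ 2 * ((n : ℝ) * (2 * G) ^ 2) :=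
            mul_le_mul_of_nonneg_left (hsum_sq n) (by positivity)
        _ = (2 * G) ^ 2 * (1 / n) := by field_simp
    have h1 : (μ {x | ε' ^ 2 ≤ f x}).toReal ≤ (2 * G) ^ 2 / ε' ^ 2 * (1 / n) := by
      rw [div_mul_eq_mul_div, le_div_iff₀ (by positivity)]
      calc (μ {x | ε' ^ 2 ≤ f x}).toReal * ε' ^ 2
          = ε' ^ 2 * (μ {x | ε' ^ 2 ≤ f x}).toReal := mul_comm _ _
        _ ≤ ∫ x, f x ∂μ := hmar
        _ ≤ (2 * G) ^ 2 * (1 / n) := hint_le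
    calc μ {ω | ε' < |(1 / (n : ℝ)) * ∑ m ∈ Icc 1 n, X m ω|}
        ≤ μ {x | ε' ^ 2 ≤ f x} := by
          refine measure_mono fun ω hω => ?_
          simp only [Set.mem_setOf_eq] at hω ⊢
          calc ε' ^ 2 ≤ |(1 / (n : ℝ)) * ∑ m ∈ Icc 1 n, X m ω| ^ 2 :=
                pow_le_pow_left₀ hε'0.le hω.le 2
            _ = f ω := by rw [hf, sq_abs]
      _ = ENNReal.ofReal (μ {x | ε' ^ 2 ≤ f x}).toReal :=
          (ENNReal.ofReal_toReal (measure_ne_top _ _)).symm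
      _ ≤ ENNReal.ofReal ((2 * G) ^ 2 / ε' ^ 2 * (1 / n)) := ENNReal.ofReal_le_ofReal h1
  -- splitting the event
  have hsplit : ∀ n : ℕ,
      μ {ω | ε < |(1 / (n : ℝ)) * ∑ m ∈ Icc 1 n, Z m ω - μlim ω|}
        ≤ μ {ω | ε' < |(1 / (n : ℝ)) * ∑ m ∈ Icc 1 n, X m ω|}
          + μ {ω | ε' < |(1 / (n : ℝ)) * ∑ m ∈ Icc 1 n, μ' m ω - μlim ω|} := by
    intro n
    refine le_trans (measure_mono ?_) (measure_union_le _ _)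
    intro ω hω
    simp only [Set.mem_setOf_eq, Set.mem_union] at hω ⊢
    by_contra hcon
    push_neg at hcon
    have key : (1 / (n : ℝ)) * ∑ m ∈ Icc 1 n, Z m ω - μlim ω
        = (1 / (n : ℝ)) * ∑ m ∈ Icc 1 n, X m ω
          + ((1 / (n : ℝ)) * ∑ m ∈ Icc 1 n, μ' m ω - μlim ω) := by
      simp only [hX]
      rw [Finset.sum_sub_distrib]
      ring
    have : ε < ε' + ε' := by
      calc ε < |(1 / (n : ℝ)) * ∑ m ∈ Icc 1 n, Z m ω - μlim ω| := hω
        _ ≤ |(1 / (n : ℝ)) * ∑ m ∈ Icc 1 n, X m ω|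
            + |(1 / (n : ℝ)) * ∑ m ∈ Icc 1 n, μ' m ω - μlim ω| := by
              rw [key]; exact abs_add_le _ _
        _ ≤ ε' + ε' := add_le_add hcon.1 hcon.2
    rw [hε'def] at this
    linarith
  -- squeeze
  have hb1 : Tendsto (fun n : ℕ => ENNReal.ofReal ((2 * G) ^ 2 / ε' ^ 2 * (1 / n)))
      atTop (nhds 0) := by
    have h := (tendsto_one_div_atTop_nhds_zero_nat.const_mul ((2 * G) ^ 2 / ε' ^ 2))
    have := ENNReal.tendsto_ofReal (h.congr fun n => rfl)
    simpa using this
  have hb := hb1.add (hconv ε' hε'0)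
  rw [add_zero] at hb
  refine tendsto_of_tendsto_of_tendsto_of_le_of_le' tendsto_const_nhds hb
    (Eventually.of_forall fun n => zero_le') ?_
  filter_upwards [eventually_ge_atTop 1] with n hn
  exact (hsplit n).trans (add_le_add_left (hcheb n hn) _)
end

section
/- Let Y be a finite nonempty set, let (Ω, F, P) be a probability space, let (Y_n)_{n≥1} be a sequence of Y-valued random variables, and let F_n = σ(Y_1, …, Y_n) be the generated filtration (F_0 trivial). For each n and y ∈ Y let p_n(y) = P(Y_n = y | F_{n−1}) denote the conditional probability (a [0,1]-valued F_{n−1}-measurable random variable). Assume there is a constant c > 0 such that almost surely p_n(Y_n) ≥ c for all n. Define the log-perplexity l_N = −(1/N) Σ_{n=1}^N log₂ p_n(Y_n) and the empirical entropy h_N = (1/N) Σ_{n=1}^N H(p_n), where H(p_n) = −Σ_{y∈Y} p_n(y) log₂ p_n(y) (with the convention 0·log₂0 = 0). Then for every ε > 0, lim_{N→∞} P(|l_N − h_N| > ε) = 0. -/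
open MeasureTheory Filter Finset
open scoped Classical

lemma aux_xlogb_bound (x : ℝ) (h0 : 0 ≤ x) (h1 : x ≤ 1) : |x * Real.logb 2 x| ≤ 2 := by
  have hl2 : (0.6931471803 : ℝ) < Real.log 2 := Real.log_two_gt_d9
  have hl2pos : (0:ℝ) < Real.log 2 := by linarith
  rcases h0.eq_or_lt with h | h
  · simp [← h]
  have hlogx : Real.log x ≤ 0 := Real.log_nonpos h0 h1
  have hkey : -(x * Real.log x) ≤ 1 := by
    have := Real.log_le_sub_one_of_pos (inv_pos.2 h)
    rw [Real.log_inv] at this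
    have h2 : x * (-Real.log x) ≤ x * (x⁻¹ - 1) :=
      mul_le_mul_of_nonneg_left (by linarith) h0
    have h3 : x * (x⁻¹ - 1) = 1 - x := by field_simp
    nlinarith
  have habs : |x * Real.logb 2 x| = -(x * Real.log x) / Real.log 2 := by
    rw [Real.logb, ← mul_div_assoc, abs_div, abs_of_pos hl2pos,
      abs_of_nonpos (mul_nonpos_of_nonneg_of_nonpos h0 hlogx), neg_div]
  rw [habs, div_le_iff₀ hl2pos]
  nlinarith

lemma aux_logb_bound (c t : ℝ) (hc : 0 < c) (hct : c ≤ t) (ht : t ≤ 1) :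
    |Real.logb 2 t| ≤ |Real.logb 2 c| := by
  have h1 : Real.logb 2 t ≤ 0 := Real.logb_nonpos one_lt_two (by linarith) ht
  have h2 : Real.logb 2 c ≤ Real.logb 2 t := Real.logb_le_logb_of_le one_lt_two hc hct
  rw [abs_of_nonpos h1, abs_of_nonpos (h2.trans h1)]
  linarith

/-- **Un-Equipartition Property for Perplexity.** Let `Y` be a finite nonempty token
alphabet, `(Y_n)_{n ≥ 1}` a sequence of `Y`-valued random variables on a probability space,
and `F_n = σ(Y_1, …, Y_n)` the generated filtration (`F_0` trivial). Let
`p_n(y) = P(Y_n = y | F_{n-1})` be the conditional next-token probabilities, and suppose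
all realized token probabilities satisfy `p_n(Y_n) ≥ c > 0` almost surely. Then the
log-perplexity `l_N = −(1/N) ∑_{n=1}^N log₂ p_n(Y_n)` and the empirical entropy
`h_N = (1/N) ∑_{n=1}^N H(p_n)` satisfy `P(|l_N − h_N| > ε) → 0` for every `ε > 0`. -/
theorem unequipartition_property_perplexity
    {Y : Type*} [Fintype Y] [Nonempty Y]
    {Ω : Type*} {m0 : MeasurableSpace Ω} (μ : Measure Ω) [IsProbabilityMeasure μ]
    (Yseq : ℕ → Ω → Y)
    (ℱ : Filtration ℕ m0)
    (hℱ : ∀ n, ℱ n = ⨆ i ∈ Icc 1 n, MeasurableSpace.comap (Yseq i) ⊤)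
    (p : ℕ → Y → Ω → ℝ)
    (hp : ∀ n y, p n y =
      μ[(fun ω => if Yseq n ω = y then (1 : ℝ) else 0) | ℱ (n - 1)])
    (c : ℝ) (hc : 0 < c)
    (hbound : ∀ᵐ ω ∂μ, ∀ n, 1 ≤ n → c ≤ p n (Yseq n ω) ω) :
    ∀ ε : ℝ, 0 < ε →
      Tendsto
        (fun N : ℕ =>
          μ {ω | ε <
            |(-(1 / (N : ℝ)) * ∑ n ∈ Icc 1 N, Real.logb 2 (p n (Yseq n ω) ω)) -
              (1 / (N : ℝ)) * ∑ n ∈ Icc 1 N, (-∑ y, p n y ω * Real.logb 2 (p n y ω))|})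
        atTop (nhds 0) := by
  intro ε hε
  have hle : ∀ n, ℱ n ≤ m0 := fun n => ℱ.le n
  set ind : ℕ → Y → Ω → ℝ := fun n y ω => if Yseq n ω = y then 1 else 0 with hind
  set B : ℝ := |Real.logb 2 c| + 2 * (Fintype.card Y : ℝ) with hBdef
  have hB0 : 0 ≤ B := by positivity
  have hlogb_meas : Measurable (Real.logb 2) := Real.measurable_log.div_const _
  -- measurability of Y events
  have hYmeas : ∀ n, 1 ≤ n → ∀ y : Y, MeasurableSet[ℱ n] {ω | Yseq n ω = y} := by
    intro n hn y
    have hcomap : MeasurableSpace.comap (Yseq n) ⊤ ≤ ℱ n := by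
      rw [hℱ n]
      exact le_iSup₂ (f := fun i (_ : i ∈ Icc 1 n) => MeasurableSpace.comap (Yseq i) ⊤)
        n (by simp [hn])
    exact hcomap _ ⟨{y}, trivial, rfl⟩
  have hindmeas : ∀ n, 1 ≤ n → ∀ y, Measurable[ℱ n] (ind n y) := fun n hn y =>
    Measurable.ite (hYmeas n hn y) measurable_const measurable_const
  have hind_int : ∀ n, 1 ≤ n → ∀ y, Integrable (ind n y) μ := by
    intro n hn y
    refine (integrable_const (1:ℝ)).mono'
      ((hindmeas n hn y).mono (hle n) le_rfl).aestronglyMeasurable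
      (ae_of_all _ fun ω => ?_)
    simp only [hind, Real.norm_eq_abs]
    split <;> norm_num
  have hpm : ∀ n y, StronglyMeasurable[ℱ (n-1)] (p n y) := by
    intro n y; rw [hp n y]; exact stronglyMeasurable_condExp
  have hpm0 : ∀ n y, Measurable (p n y) := fun n y =>
    ((hpm n y).measurable).mono (hle (n-1)) le_rfl
  -- a.e. bounds on p
  have hp01 : ∀ n, 1 ≤ n → ∀ y, ∀ᵐ ω ∂μ, 0 ≤ p n y ω ∧ p n y ω ≤ 1 := by
    intro n hn y
    have h0 : 0 ≤ᵐ[μ] p n y := by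
      rw [hp n y]
      refine condExp_nonneg (ae_of_all _ fun ω => ?_)
      simp only [Pi.zero_apply]; split <;> norm_num
    have h1 : p n y ≤ᵐ[μ] fun _ => (1:ℝ) := by
      rw [hp n y]
      have hm := condExp_mono (m := ℱ (n-1)) (hind_int n hn y) (integrable_const (1:ℝ))
        (ae_of_all _ fun ω => by simp only [hind]; split <;> norm_num)
      have hc1 : μ[(fun _ => (1:ℝ)) | ℱ (n-1)] = fun _ => (1:ℝ) := condExp_const (hle _) _
      rw [hc1] at hm
      exact hm
    filter_upwards [h0, h1] with ω hω0 hω1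
    exact ⟨hω0, hω1⟩
  have hp01' : ∀ᵐ ω ∂μ, ∀ n y, 1 ≤ n → 0 ≤ p n y ω ∧ p n y ω ≤ 1 := by
    rw [ae_all_iff]; intro n; rw [ae_all_iff]; intro y
    by_cases hn : 1 ≤ n
    · exact (hp01 n hn y).mono fun ω h _ => h
    · exact ae_of_all _ fun ω h => absurd h hn
  -- the martingale differences
  set D : ℕ → Ω → ℝ := fun n ω =>
    (∑ y, (-Real.logb 2 (p n y ω)) * ind n y ω) +
      ∑ y, p n y ω * Real.logb 2 (p n y ω) with hDdef
  have hDval : ∀ n ω, D n ω =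
      -Real.logb 2 (p n (Yseq n ω) ω) + ∑ y, p n y ω * Real.logb 2 (p n y ω) := by
    intro n ω
    simp only [hDdef, hind, mul_ite, mul_one, mul_zero, Finset.sum_ite_eq, Finset.mem_univ,
      if_true]
  have hDmeas : ∀ n, 1 ≤ n → StronglyMeasurable[ℱ n] (D n) := by
    intro n hn
    have hpm' : ∀ y, Measurable[ℱ n] (p n y) :=
      fun y => ((hpm n y).measurable).mono (ℱ.mono (Nat.sub_le n 1)) le_rfl
    refine Measurable.stronglyMeasurable ?_
    refine Measurable.add ?_ ?_
    · exact Finset.measurable_sum _ fun y _ =>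
        ((hlogb_meas.comp (hpm' y)).neg).mul (hindmeas n hn y)
    · exact Finset.measurable_sum _ fun y _ =>
        (hpm' y).mul (hlogb_meas.comp (hpm' y))
  have hDbound : ∀ᵐ ω ∂μ, ∀ n, 1 ≤ n → |D n ω| ≤ B := by
    filter_upwards [hbound, hp01'] with ω h1 h2
    intro n hn
    rw [hDval]
    refine (abs_add_le _ _).trans ?_
    have hq := h2 n (Yseq n ω) hn
    have ha : |(-Real.logb 2 (p n (Yseq n ω) ω))| ≤ |Real.logb 2 c| := by
      rw [abs_neg]
      exact aux_logb_bound c _ hc (h1 n hn) hq.2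
    have hb : |∑ y, p n y ω * Real.logb 2 (p n y ω)| ≤ 2 * (Fintype.card Y : ℝ) := by
      refine (Finset.abs_sum_le_sum_abs _ _).trans ?_
      have : ∀ y ∈ Finset.univ, |p n y ω * Real.logb 2 (p n y ω)| ≤ 2 :=
        fun y _ => aux_xlogb_bound _ (h2 n y hn).1 (h2 n y hn).2
      calc ∑ y, |p n y ω * Real.logb 2 (p n y ω)| ≤ ∑ _y : Y, (2:ℝ) :=
            Finset.sum_le_sum this
        _ = 2 * (Fintype.card Y : ℝ) := by
            rw [Finset.sum_const, Finset.card_univ, nsmul_eq_mul, mul_comm]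
    rw [hBdef]; linarith
  have hDint : ∀ n, 1 ≤ n → Integrable (D n) μ := by
    intro n hn
    refine (integrable_const B).mono'
      (((hDmeas n hn).mono (hle n)).aestronglyMeasurable) ?_
    filter_upwards [hDbound] with ω hω
    exact hω n hn
  have hDDint : ∀ n k, 1 ≤ n → 1 ≤ k → Integrable (fun ω => D n ω * D k ω) μ := by
    intro n k hn hk
    refine (integrable_const (B * B)).mono'
      ((((hDmeas n hn).mono (hle n)).measurable.mul
        ((hDmeas k hk).mono (hle k)).measurable).aestronglyMeasurable) ?_
    filter_upwards [hDbound] with ω hω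
    rw [Real.norm_eq_abs, abs_mul]
    exact mul_le_mul (hω n hn) (hω k hk) (abs_nonneg _) hB0
  -- conditional expectation of D n vanishes
  have hcond : ∀ n, 1 ≤ n → μ[D n | ℱ (n-1)] =ᵐ[μ] 0 := by
    intro n hn
    have hm : ℱ (n-1) ≤ m0 := hle _
    set F : Y → Ω → ℝ := fun y ω => (-Real.logb 2 (p n y ω)) * ind n y ω with hF
    set G : Ω → ℝ := fun ω => ∑ y, p n y ω * Real.logb 2 (p n y ω) with hG
    have hg_sm : ∀ y, StronglyMeasurable[ℱ (n-1)]
        (fun ω => -Real.logb 2 (p n y ω)) := fun y =>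
      ((hlogb_meas.comp (hpm n y).measurable).neg).stronglyMeasurable
    have hF_int : ∀ y, Integrable (F y) μ := by
      intro y
      refine (integrable_const |Real.logb 2 c|).mono'
        ((((hlogb_meas.comp (hpm0 n y)).neg).mul
          ((hindmeas n hn y).mono (hle n) le_rfl)).aestronglyMeasurable) ?_
      filter_upwards [hbound, hp01'] with ω h1 h2
      simp only [hF, hind, Real.norm_eq_abs]
      by_cases hy : Yseq n ω = y
      · rw [if_pos hy, mul_one, abs_neg, ← hy]
        exact aux_logb_bound c _ hc (h1 n hn) (h2 n (Yseq n ω) hn).2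
      · rw [if_neg hy, mul_zero, abs_zero]
        exact abs_nonneg _
    have hG_int : Integrable G μ := by
      refine (integrable_const (2 * (Fintype.card Y : ℝ))).mono'
        ((Finset.measurable_sum _ fun y _ =>
          (hpm0 n y).mul (hlogb_meas.comp (hpm0 n y))).aestronglyMeasurable) ?_
      filter_upwards [hp01'] with ω h2
      rw [Real.norm_eq_abs]
      refine (Finset.abs_sum_le_sum_abs _ _).trans ?_
      calc ∑ y, |p n y ω * Real.logb 2 (p n y ω)| ≤ ∑ _y : Y, (2:ℝ) :=
            Finset.sum_le_sum fun y _ => aux_xlogb_bound _ (h2 n y hn).1 (h2 n y hn).2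
        _ = 2 * (Fintype.card Y : ℝ) := by
            rw [Finset.sum_const, Finset.card_univ, nsmul_eq_mul, mul_comm]
    have hG_sm : StronglyMeasurable[ℱ (n-1)] G :=
      (Finset.measurable_sum _ fun y _ =>
        ((hpm n y).measurable).mul (hlogb_meas.comp (hpm n y).measurable)).stronglyMeasurable
    have hDfun : D n = (∑ y, F y) + G := by
      funext ω
      simp only [hDdef, hF, hG, Pi.add_apply, Finset.sum_apply]
    rw [hDfun]
    have h1 : μ[(∑ y, F y) + G | ℱ (n-1)] =ᵐ[μ]
        μ[∑ y, F y | ℱ (n-1)] + μ[G | ℱ (n-1)] :=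
      condExp_add (integrable_finset_sum' _ fun y _ => hF_int y) hG_int _
    have h2 : μ[∑ y, F y | ℱ (n-1)] =ᵐ[μ] ∑ y, μ[F y | ℱ (n-1)] :=
      condExp_finset_sum (fun y _ => hF_int y) _
    have h3 : ∀ y : Y, μ[F y | ℱ (n-1)] =ᵐ[μ]
        fun ω => (-Real.logb 2 (p n y ω)) * p n y ω := by
      intro y
      have := condExp_mul_of_stronglyMeasurable_left (hg_sm y) (hF_int y) (hind_int n hn y)
      refine this.trans ?_
      rw [← hp n y]
      rfl
    have h4 : ∑ y, μ[F y | ℱ (n-1)] =ᵐ[μ]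
        fun ω => ∑ y, (-Real.logb 2 (p n y ω)) * p n y ω := by
      have hall : ∀ᵐ ω ∂μ, ∀ y : Y,
          (μ[F y | ℱ (n-1)]) ω = (-Real.logb 2 (p n y ω)) * p n y ω :=
        ae_all_iff.2 fun y => h3 y
      filter_upwards [hall] with ω hω
      rw [Finset.sum_apply]
      exact Finset.sum_congr rfl fun y _ => hω y
    have h5 : μ[G | ℱ (n-1)] = G := condExp_of_stronglyMeasurable hm hG_sm hG_int
    refine h1.trans ?_
    rw [h5]
    refine ((h2.trans h4).add (EventuallyEq.refl _ G)).trans (ae_of_all _ fun ω => ?_)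
    simp only [Pi.add_apply, Pi.zero_apply, hG]
    rw [← Finset.sum_add_distrib]
    exact Finset.sum_eq_zero fun y _ => by ring
  -- orthogonality of martingale differences
  have horth : ∀ n k, 1 ≤ n → n < k → ∫ ω, D n ω * D k ω ∂μ = 0 := by
    intro n k hn hnk
    have hk : 1 ≤ k := hn.trans hnk.le
    have hm : ℱ (k-1) ≤ m0 := hle _
    have hDn_sm : StronglyMeasurable[ℱ (k-1)] (D n) :=
      (hDmeas n hn).mono (ℱ.mono (by omega : n ≤ k - 1))
    have h1 : μ[(fun ω => D n ω * D k ω) | ℱ (k-1)] =ᵐ[μ] D n * μ[D k | ℱ (k-1)] :=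
      condExp_mul_of_stronglyMeasurable_left hDn_sm (hDDint n k hn hk) (hDint k hk)
    have h2 : D n * μ[D k | ℱ (k-1)] =ᵐ[μ] 0 := by
      filter_upwards [hcond k hk] with ω hω
      simp only [Pi.mul_apply, Pi.zero_apply] at *
      rw [hω, mul_zero]
    calc ∫ ω, D n ω * D k ω ∂μ
        = ∫ ω, (μ[(fun ω => D n ω * D k ω) | ℱ (k-1)]) ω ∂μ := (integral_condExp hm).symm
      _ = ∫ _ω, (0:ℝ) ∂μ := integral_congr_ae (h1.trans h2)
      _ = 0 := integral_zero _ _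
  -- integrability of the square of the partial sums
  have hsqeq : ∀ N : ℕ, (fun ω => (∑ n ∈ Icc 1 N, D n ω)^2)
      = fun ω => ∑ n ∈ Icc 1 N, ∑ k ∈ Icc 1 N, D n ω * D k ω := by
    intro N; funext ω; rw [sq, Finset.sum_mul_sum]
  have hSint : ∀ N, 1 ≤ N → Integrable (fun ω => (∑ n ∈ Icc 1 N, D n ω)^2) μ := by
    intro N _hN
    rw [hsqeq N]
    exact integrable_finset_sum _ fun n hn => integrable_finset_sum _ fun k hk =>
      hDDint n k (mem_Icc.1 hn).1 (mem_Icc.1 hk).1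
  -- variance bound
  have hvar : ∀ N, 1 ≤ N → ∫ ω, (∑ n ∈ Icc 1 N, D n ω)^2 ∂μ ≤ (N : ℝ) * B^2 := by
    intro N _hN
    rw [hsqeq N, integral_finset_sum _ (fun n hn => integrable_finset_sum _ fun k hk =>
      hDDint n k (mem_Icc.1 hn).1 (mem_Icc.1 hk).1)]
    have hdiag : ∀ n ∈ Icc 1 N, ∫ ω, ∑ k ∈ Icc 1 N, D n ω * D k ω ∂μ
        = ∫ ω, D n ω * D n ω ∂μ := by
      intro n hn
      rw [integral_finset_sum _ (fun k hk => hDDint n k (mem_Icc.1 hn).1 (mem_Icc.1 hk).1)]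
      refine Finset.sum_eq_single_of_mem n hn fun k hk hkn => ?_
      rcases lt_or_gt_of_ne hkn with h | h
      · have heq : (fun ω => D n ω * D k ω) = fun ω => D k ω * D n ω := by
          funext ω; ring
        rw [show (∫ ω, D n ω * D k ω ∂μ) = ∫ ω, D k ω * D n ω ∂μ from by rw [heq]]
        exact horth k n (mem_Icc.1 hk).1 h
      · exact horth n k (mem_Icc.1 hn).1 h
    rw [Finset.sum_congr rfl hdiag]
    have hterm : ∀ n ∈ Icc 1 N, ∫ ω, D n ω * D n ω ∂μ ≤ B^2 := by
      intro n hn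
      have hb : (fun ω => D n ω * D n ω) ≤ᵐ[μ] fun _ => B^2 := by
        filter_upwards [hDbound] with ω hω
        have h1 := hω n (mem_Icc.1 hn).1
        calc D n ω * D n ω = |D n ω| * |D n ω| := (abs_mul_abs_self _).symm
          _ ≤ B * B := mul_le_mul h1 h1 (abs_nonneg _) hB0
          _ = B^2 := (sq B).symm
      have hmono := integral_mono_ae (hDDint n n (mem_Icc.1 hn).1 (mem_Icc.1 hn).1)
        (integrable_const (B^2)) hb
      simpa [integral_const, measure_univ] using hmono
    calc ∑ n ∈ Icc 1 N, ∫ ω, D n ω * D n ω ∂μ ≤ ∑ _n ∈ Icc 1 N, B^2 :=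
          Finset.sum_le_sum hterm
      _ = (N:ℝ) * B^2 := by
          rw [Finset.sum_const, Nat.card_Icc, nsmul_eq_mul]
          simp
  -- Chebyshev bound on the bad event
  have hmain : ∀ N : ℕ, 1 ≤ N →
      μ {ω | ε <
          |(-(1 / (N : ℝ)) * ∑ n ∈ Icc 1 N, Real.logb 2 (p n (Yseq n ω) ω)) -
            (1 / (N : ℝ)) * ∑ n ∈ Icc 1 N, (-∑ y, p n y ω * Real.logb 2 (p n y ω))|}
        ≤ ENNReal.ofReal ((B^2/ε^2) / N) := by
    intro N hN
    have hNpos : (0:ℝ) < N := by exact_mod_cast hN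
    have hsub : {ω | ε <
          |(-(1 / (N : ℝ)) * ∑ n ∈ Icc 1 N, Real.logb 2 (p n (Yseq n ω) ω)) -
            (1 / (N : ℝ)) * ∑ n ∈ Icc 1 N, (-∑ y, p n y ω * Real.logb 2 (p n y ω))|}
        ⊆ {x | ((N:ℝ)*ε)^2 ≤ (∑ n ∈ Icc 1 N, D n x)^2} := by
      intro ω hω
      rw [Set.mem_setOf_eq] at hω ⊢
      have hexpr : (-(1 / (N : ℝ)) * ∑ n ∈ Icc 1 N, Real.logb 2 (p n (Yseq n ω) ω)) -
            (1 / (N : ℝ)) * ∑ n ∈ Icc 1 N, (-∑ y, p n y ω * Real.logb 2 (p n y ω))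
          = (1/(N:ℝ)) * ∑ n ∈ Icc 1 N, D n ω := by
        have hsum : ∑ n ∈ Icc 1 N, D n ω = ∑ n ∈ Icc 1 N,
            (-Real.logb 2 (p n (Yseq n ω) ω) + ∑ y, p n y ω * Real.logb 2 (p n y ω)) :=
          Finset.sum_congr rfl fun n _ => hDval n ω
        rw [hsum, Finset.sum_add_distrib, Finset.sum_neg_distrib, Finset.sum_neg_distrib]
        ring
      rw [hexpr, abs_mul, abs_of_pos (by positivity : (0:ℝ) < 1/(N:ℝ))] at hω
      have h1 : (N:ℝ)*ε ≤ |∑ n ∈ Icc 1 N, D n ω| := by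
        have h2 := (mul_lt_mul_iff_right₀ hNpos).2 hω
        have h3 : (N:ℝ) * (1/(N:ℝ) * |∑ n ∈ Icc 1 N, D n ω|)
            = |∑ n ∈ Icc 1 N, D n ω| := by
          field_simp
        rw [h3] at h2
        exact h2.le
      calc ((N:ℝ)*ε)^2 ≤ |∑ n ∈ Icc 1 N, D n ω|^2 :=
            pow_le_pow_left₀ (by positivity) h1 2
        _ = (∑ n ∈ Icc 1 N, D n ω)^2 := sq_abs _
    refine le_trans (measure_mono hsub) ?_
    have hmark := mul_meas_ge_le_integral_of_nonneg
      (ae_of_all μ fun ω => sq_nonneg (∑ n ∈ Icc 1 N, D n ω)) (hSint N hN) (((N:ℝ)*ε)^2)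
    have hfin := hmark.trans (hvar N hN)
    have hpos2 : (0:ℝ) < ((N:ℝ)*ε)^2 := by positivity
    have htr : (μ {x | ((N:ℝ)*ε)^2 ≤ (∑ n ∈ Icc 1 N, D n x)^2}).toReal
        ≤ (B^2/ε^2)/N := by
      have h2 : (μ {x | ((N:ℝ)*ε)^2 ≤ (∑ n ∈ Icc 1 N, D n x)^2}).toReal
          ≤ ((N:ℝ) * B^2) / ((N:ℝ)*ε)^2 := by
        rw [le_div_iff₀ hpos2]
        rw [measureReal_def] at hfin
        linarith [hfin]
      refine h2.trans (le_of_eq ?_)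
      field_simp
    exact (ENNReal.le_ofReal_iff_toReal_le (measure_ne_top μ _) (by positivity)).2 htr
  -- conclusion by squeezing
  have hupper : Tendsto (fun N : ℕ => ENNReal.ofReal ((B^2/ε^2) / N)) atTop (nhds 0) := by
    have h := tendsto_const_div_atTop_nhds_zero_nat (B^2/ε^2)
    have h2 := ENNReal.tendsto_ofReal h
    simpa using h2
  refine tendsto_of_tendsto_of_tendsto_of_le_of_le' tendsto_const_nhds hupper
    (Eventually.of_forall fun N => zero_le) ?_
  filter_upwards [eventually_ge_atTop 1] with N hN
  exact hmain N hN
end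

section
/- Let Y be a finite nonempty set. For each n ≥ 1 let P_n be a probability mass function on Y^n, let h_n : Y^n → ℝ be a function, let G(n) ⊆ Y^n be a nonempty subset with g(n) = (1/n) log₂ |G(n)|, and define l_n(y) = −(1/n) log₂ P_n(y) for y with P_n(y) > 0. Assume: (i) there is p_G > 0 with P_n(G(n)) ≥ p_G for all n; (ii) for every δ > 0, lim_{n→∞} P_n({ y : P_n(y) > 0 and |l_n(y) − h_n(y)| > δ }) = 0. Then for every ε > 0, lim_{n→∞} P_n({ y ∈ G(n) : h_n(y) > g(n) + ε }) / P_n(G(n)) = 0; that is, conditioned on producing a grammatical string, the probability that the empirical entropy exceeds g(n) + ε tends to zero. -/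
open Finset Filter
open scoped Classical

/-- **Entropies cannot be too large.** Let `Y` be a finite nonempty token alphabet. For
each `n ≥ 1`, let `P_n` be a pmf on `Y^n` (the law of the model's length-`n` output),
`h_n : Y^n → ℝ` the empirical entropy, `G(n) ⊆ Y^n` nonempty with
`g(n) = (1/n) log₂ |G(n)|`, and `l_n(y) = −(1/n) log₂ P_n(y)`. Assume (i) `P_n(G(n)) ≥ p_G > 0`
for all `n`, and (ii) the Un-Equipartition Property: for every `δ > 0`,
`P_n(|l_n − h_n| > δ) → 0`. Then for every `ε > 0`, conditioned on producing a grammatical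
string, the probability that the empirical entropy exceeds `g(n) + ε` tends to zero. -/
theorem empirical_entropy_not_too_large
    {Y : Type*} [Fintype Y] [Nonempty Y]
    (P : (n : ℕ) → (Fin n → Y) → ℝ)
    (hP0 : ∀ n y, 0 ≤ P n y) (hP1 : ∀ n, ∑ y, P n y = 1)
    (h : (n : ℕ) → (Fin n → Y) → ℝ)
    (G : (n : ℕ) → Finset (Fin n → Y)) (hGne : ∀ n, (G n).Nonempty)
    (pG : ℝ) (hpG : 0 < pG)
    (hPG : ∀ n, pG ≤ ∑ y ∈ G n, P n y)
    (hUEP : ∀ δ : ℝ, 0 < δ →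
      Tendsto (fun n : ℕ =>
          ∑ y ∈ univ.filter (fun y : Fin n → Y => 0 < P n y ∧
            δ < |(-(1 / (n : ℝ)) * Real.logb 2 (P n y)) - h n y|), P n y)
        atTop (nhds 0)) :
    ∀ ε : ℝ, 0 < ε →
      Tendsto (fun n : ℕ =>
          (∑ y ∈ (G n).filter (fun y =>
              (1 / (n : ℝ)) * Real.logb 2 ((G n).card : ℝ) + ε < h n y), P n y) /
            (∑ y ∈ G n, P n y))
        atTop (nhds 0) := by
  intro ε hε
  set δ := ε / 2 with hδdef
  have hδ : 0 < δ := by positivity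
  have hA := hUEP δ hδ
  -- the geometric bound
  have hb : Tendsto (fun n : ℕ => ((2:ℝ) ^ (-δ)) ^ n) atTop (nhds 0) := by
    apply tendsto_pow_atTop_nhds_zero_of_lt_one
    · positivity
    · rw [Real.rpow_neg (by norm_num), inv_lt_one_iff₀]
      right
      exact Real.one_lt_rpow_iff_of_pos (by norm_num) |>.2 (Or.inl ⟨by norm_num, hδ⟩)
  have hlim : Tendsto (fun n : ℕ =>
      ((∑ y ∈ univ.filter (fun y : Fin n → Y => 0 < P n y ∧
          δ < |(-(1 / (n : ℝ)) * Real.logb 2 (P n y)) - h n y|), P n y)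
        + ((2:ℝ) ^ (-δ)) ^ n) / pG) atTop (nhds 0) := by
    have := (hA.add hb).div_const pG
    simpa using this
  apply tendsto_of_tendsto_of_tendsto_of_le_of_le' (g := fun _ => (0:ℝ)) tendsto_const_nhds hlim
  · filter_upwards with n
    have hnum : 0 ≤ ∑ y ∈ (G n).filter (fun y =>
        (1 / (n : ℝ)) * Real.logb 2 ((G n).card : ℝ) + ε < h n y), P n y :=
      Finset.sum_nonneg fun y _ => hP0 n y
    have hden : 0 < ∑ y ∈ G n, P n y := lt_of_lt_of_le hpG (hPG n)
    positivity
  · -- main bound, eventually in n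
    filter_upwards [eventually_ge_atTop 1] with n hn1
    have hnpos : (0:ℝ) < n := by exact_mod_cast hn1
    set Lg : ℝ := Real.logb 2 ((G n).card : ℝ) with hLg
    set S := (G n).filter (fun y => (1 / (n : ℝ)) * Lg + ε < h n y) with hS
    set A := univ.filter (fun y : Fin n → Y => 0 < P n y ∧
        δ < |(-(1 / (n : ℝ)) * Real.logb 2 (P n y)) - h n y|) with hAdef
    have hcard : (0:ℝ) < ((G n).card : ℝ) := by
      exact_mod_cast Finset.card_pos.2 (hGne n)
    have h2Lg : (2:ℝ) ^ Lg = ((G n).card : ℝ) :=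
      Real.rpow_logb (by norm_num) (by norm_num) hcard
    -- pointwise bound on S \ A
    have key : ∀ y ∈ S \ A, P n y ≤ ((2:ℝ) ^ (-δ)) ^ n / ((G n).card : ℝ) := by
      intro y hy
      rw [Finset.mem_sdiff] at hy
      obtain ⟨hyS, hyA⟩ := hy
      rcases eq_or_lt_of_le (hP0 n y) with hP | hP
      · rw [← hP]; positivity
      · have hnA : ¬ (0 < P n y ∧ δ < |(-(1 / (n : ℝ)) * Real.logb 2 (P n y)) - h n y|) := by
          simpa [hAdef] using hyA
        push_neg at hnA
        have habs := hnA hP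
        rw [abs_sub_le_iff] at habs
        have hhy : (1 / (n : ℝ)) * Lg + ε < h n y := (Finset.mem_filter.1 hyS).2
        -- l ≥ h - δ > (1/n)Lg + ε - δ = (1/n)Lg + δ
        have hl : (1 / (n : ℝ)) * Lg + δ < -(1 / (n : ℝ)) * Real.logb 2 (P n y) := by
          have := habs.2
          nlinarith [hδdef]
        have hlog : Real.logb 2 (P n y) < -(Lg + n * δ) := by
          have h1 : (1 / (n : ℝ)) * Lg + δ < -(1 / (n : ℝ)) * Real.logb 2 (P n y) := hl
          have hn' : (n:ℝ) ≠ 0 := ne_of_gt hnpos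
          have h2 := mul_lt_mul_of_pos_left h1 hnpos
          have h3 : (n:ℝ) * (1/(n:ℝ)*Lg + δ) = Lg + n*δ := by field_simp
          have h4 : (n:ℝ) * (-(1/(n:ℝ))*Real.logb 2 (P n y)) = -Real.logb 2 (P n y) := by
            field_simp
          linarith
        have hPlt : P n y < (2:ℝ) ^ (-(Lg + n * δ)) := by
          calc P n y = (2:ℝ) ^ Real.logb 2 (P n y) :=
                (Real.rpow_logb (by norm_num) (by norm_num) hP).symm
            _ < (2:ℝ) ^ (-(Lg + n * δ)) :=
                Real.rpow_lt_rpow_left_iff (by norm_num) |>.2 hlog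
        have heq : (2:ℝ) ^ (-(Lg + n * δ)) = ((2:ℝ) ^ (-δ)) ^ n / ((G n).card : ℝ) := by
          rw [← h2Lg, ← Real.rpow_natCast ((2:ℝ) ^ (-δ)) n, ← Real.rpow_mul (by norm_num),
            ← Real.rpow_sub (by norm_num)]
          ring_nf
        linarith [hPlt, heq ▸ hPlt]
    -- sum over S ≤ sum over S∩A + sum over S\A
    have hsplit : ∑ y ∈ S, P n y ≤ (∑ y ∈ A, P n y) + ((2:ℝ) ^ (-δ)) ^ n := by
      have h1 : ∑ y ∈ S, P n y = (∑ y ∈ S ∩ A, P n y) + ∑ y ∈ S \ A, P n y := by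
        rw [← Finset.sum_inter_add_sum_sdiff]
      have h2 : ∑ y ∈ S ∩ A, P n y ≤ ∑ y ∈ A, P n y :=
        Finset.sum_le_sum_of_subset_of_nonneg (Finset.inter_subset_right)
          (fun y _ _ => hP0 n y)
      have h3 : ∑ y ∈ S \ A, P n y ≤ ((2:ℝ) ^ (-δ)) ^ n := by
        calc ∑ y ∈ S \ A, P n y
            ≤ ∑ _y ∈ S \ A, ((2:ℝ) ^ (-δ)) ^ n / ((G n).card : ℝ) :=
              Finset.sum_le_sum key
          _ = (S \ A).card * (((2:ℝ) ^ (-δ)) ^ n / ((G n).card : ℝ)) := by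
              rw [Finset.sum_const, nsmul_eq_mul]
          _ ≤ (G n).card * (((2:ℝ) ^ (-δ)) ^ n / ((G n).card : ℝ)) := by
              apply mul_le_mul_of_nonneg_right
              · exact_mod_cast Finset.card_le_card
                  ((Finset.sdiff_subset).trans (Finset.filter_subset _ _))
              · positivity
          _ = ((2:ℝ) ^ (-δ)) ^ n := by field_simp
      linarith
    have hden : 0 < ∑ y ∈ G n, P n y := lt_of_lt_of_le hpG (hPG n)
    exact div_le_div₀ (add_nonneg (Finset.sum_nonneg fun y _ => hP0 n y) (by positivity)) hsplit hpG (hPG n)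
end

section
/- Let Y be a finite nonempty set. For each n ≥ 1 let P_n be a probability mass function on Y^n, let h_n : Y^n → ℝ be a function, let G(n) ⊆ Y^n be a nonempty subset with g(n) = (1/n) log₂ |G(n)|, and define l_n(y) = −(1/n) log₂ P_n(y) for y with P_n(y) > 0. Fix ε > 0 and define the purged typical set 𝒫_n(ε) = { y ∈ G(n) : P_n(y) > 0, |l_n(y) − h_n(y)| < ε, and l_n(y) ≤ g(n) + ε/2 }. Assume: (i) there is p_G > 0 with P_n(G(n)) ≥ p_G for all n; (ii) for every δ > 0, lim_{n→∞} P_n({ y : P_n(y) > 0 and |l_n(y) − h_n(y)| > δ }) = 0. Then lim_{n→∞} P_n(𝒫_n(ε)) / P_n(G(n)) = 1. -/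
open Finset Filter
open scoped Classical

/-- **The purged typical set carries all the conditional probability mass.** Let `Y` be a
finite nonempty token alphabet. For each `n ≥ 1`, let `P_n` be a pmf on `Y^n`,
`h_n : Y^n → ℝ` the empirical entropy, `G(n) ⊆ Y^n` nonempty with
`g(n) = (1/n) log₂ |G(n)|`, and `l_n(y) = −(1/n) log₂ P_n(y)`. Fix `ε > 0` and let
`𝒫_n(ε) = { y ∈ G(n) : P_n(y) > 0, |l_n(y) − h_n(y)| < ε, l_n(y) ≤ g(n) + ε/2 }`.
Assume (i) `P_n(G(n)) ≥ p_G > 0` for all `n`, and (ii) for every `δ > 0`,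
`P_n(|l_n − h_n| > δ) → 0`. Then `P_n(𝒫_n(ε)) / P_n(G(n)) → 1`. -/
theorem purged_typical_set_conditional_prob_tendsto_one
    {Y : Type*} [Fintype Y] [Nonempty Y]
    (P : (n : ℕ) → (Fin n → Y) → ℝ)
    (hP0 : ∀ n y, 0 ≤ P n y) (hP1 : ∀ n, ∑ y, P n y = 1)
    (h : (n : ℕ) → (Fin n → Y) → ℝ)
    (G : (n : ℕ) → Finset (Fin n → Y)) (hGne : ∀ n, (G n).Nonempty)
    (pG : ℝ) (hpG : 0 < pG)
    (hPG : ∀ n, pG ≤ ∑ y ∈ G n, P n y)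
    (hUEP : ∀ δ : ℝ, 0 < δ →
      Tendsto (fun n : ℕ =>
          ∑ y ∈ univ.filter (fun y : Fin n → Y => 0 < P n y ∧
            δ < |(-(1 / (n : ℝ)) * Real.logb 2 (P n y)) - h n y|), P n y)
        atTop (nhds 0))
    (ε : ℝ) (hε : 0 < ε) :
    Tendsto (fun n : ℕ =>
        (∑ y ∈ (G n).filter (fun y => 0 < P n y ∧
            |(-(1 / (n : ℝ)) * Real.logb 2 (P n y)) - h n y| < ε ∧
            -(1 / (n : ℝ)) * Real.logb 2 (P n y) ≤
              (1 / (n : ℝ)) * Real.logb 2 ((G n).card : ℝ) + ε / 2), P n y) /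
          (∑ y ∈ G n, P n y))
      atTop (nhds 1) := by
  set l : (n : ℕ) → (Fin n → Y) → ℝ :=
    fun n y => -(1 / (n : ℝ)) * Real.logb 2 (P n y) with hldef
  set g : ℕ → ℝ := fun n => (1 / (n : ℝ)) * Real.logb 2 ((G n).card : ℝ) with hgdef
  set A : ℕ → ℝ := fun n => ∑ y ∈ (G n).filter (fun y => 0 < P n y ∧
      |l n y - h n y| < ε ∧ l n y ≤ g n + ε / 2), P n y with hAdef
  set S : ℕ → ℝ := fun n => ∑ y ∈ G n, P n y with hSdef
  set B : ℕ → ℝ := fun n => ∑ y ∈ univ.filter (fun y : Fin n → Y =>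
      0 < P n y ∧ ε / 2 < |l n y - h n y|), P n y with hBdef
  set C : ℕ → ℝ := fun n => ∑ y ∈ (G n).filter (fun y =>
      0 < P n y ∧ g n + ε / 2 < l n y), P n y with hCdef
  have hSpos : ∀ n, 0 < S n := fun n => lt_of_lt_of_le hpG (hPG n)
  have hAS : ∀ n, A n ≤ S n := fun n =>
    sum_le_sum_of_subset_of_nonneg (filter_subset _ _) (fun y hy _ => hP0 n y)
  have hBnn : ∀ n, 0 ≤ B n := fun n => sum_nonneg fun y _ => hP0 n y
  have hCnn : ∀ n, 0 ≤ C n := fun n => sum_nonneg fun y _ => hP0 n y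
  -- main decomposition bound
  have hmain : ∀ n, S n - A n ≤ B n + C n := by
    intro n
    have hsplit : A n + ∑ y ∈ (G n).filter (fun y => ¬(0 < P n y ∧
        |l n y - h n y| < ε ∧ l n y ≤ g n + ε / 2)), P n y = S n :=
      sum_filter_add_sum_filter_not _ _ _
    have hbound : ∑ y ∈ (G n).filter (fun y => ¬(0 < P n y ∧
        |l n y - h n y| < ε ∧ l n y ≤ g n + ε / 2)), P n y ≤ B n + C n := by
      have hstep : ∑ y ∈ (G n).filter (fun y => ¬(0 < P n y ∧
          |l n y - h n y| < ε ∧ l n y ≤ g n + ε / 2)), P n y ≤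
          ∑ y ∈ (G n).filter (fun y => ¬(0 < P n y ∧
          |l n y - h n y| < ε ∧ l n y ≤ g n + ε / 2)),
          ((if 0 < P n y ∧ ε / 2 < |l n y - h n y| then P n y else 0) +
           (if 0 < P n y ∧ g n + ε / 2 < l n y then P n y else 0)) := by
        apply sum_le_sum
        intro y hy
        rw [mem_filter] at hy
        rcases eq_or_lt_of_le (hP0 n y) with hz | hz
        · simp [← hz]
        · have hnot := hy.2
          push_neg at hnot
          rcases le_or_gt ε |l n y - h n y| with hb | hb
          · have : ε / 2 < |l n y - h n y| := by linarith
            rw [if_pos ⟨hz, this⟩]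
            have : (0:ℝ) ≤ if 0 < P n y ∧ g n + ε / 2 < l n y then P n y else 0 := by
              split
              exacts [hP0 n y, le_rfl]
            linarith
          · have hc := hnot hz hb
            rw [if_pos (⟨hz, hc⟩ : 0 < P n y ∧ g n + ε / 2 < l n y)]
            have : (0:ℝ) ≤ if 0 < P n y ∧ ε / 2 < |l n y - h n y| then P n y else 0 := by
              split
              exacts [hP0 n y, le_rfl]
            linarith
      rw [sum_add_distrib] at hstep
      have h1 : ∑ y ∈ (G n).filter (fun y => ¬(0 < P n y ∧
          |l n y - h n y| < ε ∧ l n y ≤ g n + ε / 2)),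
          (if 0 < P n y ∧ ε / 2 < |l n y - h n y| then P n y else 0) ≤ B n := by
        have hBe : B n = ∑ y ∈ (univ : Finset (Fin n → Y)),
            (if 0 < P n y ∧ ε / 2 < |l n y - h n y| then P n y else 0) := sum_filter _ _
        rw [hBe]
        refine sum_le_sum_of_subset_of_nonneg (fun y _ => mem_univ y) ?_
        intro y _ _
        split
        exacts [hP0 n y, le_rfl]
      have h2 : ∑ y ∈ (G n).filter (fun y => ¬(0 < P n y ∧
          |l n y - h n y| < ε ∧ l n y ≤ g n + ε / 2)),
          (if 0 < P n y ∧ g n + ε / 2 < l n y then P n y else 0) ≤ C n := by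
        have hCe : C n = ∑ y ∈ G n,
            (if 0 < P n y ∧ g n + ε / 2 < l n y then P n y else 0) := sum_filter _ _
        rw [hCe]
        refine sum_le_sum_of_subset_of_nonneg (filter_subset _ _) ?_
        intro y _ _
        split
        exacts [hP0 n y, le_rfl]
      linarith
    linarith
  -- bound on C for n ≥ 1
  have hCbd : ∀ n : ℕ, 1 ≤ n → C n ≤ (2:ℝ) ^ (-(ε / 2) * (n:ℝ)) := by
    intro n hn
    have hn0 : (0:ℝ) < n := by exact_mod_cast hn
    have hcard : (0:ℝ) < ((G n).card : ℝ) := by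
      exact_mod_cast card_pos.mpr (hGne n)
    have hpt : ∀ y ∈ (G n).filter (fun y => 0 < P n y ∧ g n + ε / 2 < l n y),
        P n y ≤ ((G n).card : ℝ)⁻¹ * (2:ℝ) ^ (-(ε / 2) * (n:ℝ)) := by
      intro y hy
      rw [mem_filter] at hy
      obtain ⟨hyG, hPy, hly⟩ := hy
      have hlogb : Real.logb 2 (P n y) < -Real.logb 2 ((G n).card : ℝ) - ε / 2 * n := by
        have := hly
        rw [hldef, hgdef] at this
        simp only at this
        have hmul := (mul_lt_mul_iff_right₀ hn0).mpr this
        rw [mul_add, ← mul_assoc, ← mul_assoc] at hmul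
        rw [mul_one_div_cancel (ne_of_gt hn0), one_mul] at hmul
        have hneg : (n:ℝ) * -(1/(n:ℝ)) = -1 := by field_simp
        rw [hneg, neg_one_mul] at hmul
        linarith
      have hPeq : P n y = (2:ℝ) ^ (Real.logb 2 (P n y)) :=
        (Real.rpow_logb two_pos (by norm_num) hPy).symm
      have hlt : P n y ≤ (2:ℝ) ^ (-Real.logb 2 ((G n).card : ℝ) - ε / 2 * n) := by
        rw [hPeq]
        exact le_of_lt ((Real.rpow_lt_rpow_left_iff one_lt_two).mpr hlogb)
      calc P n y ≤ (2:ℝ) ^ (-Real.logb 2 ((G n).card : ℝ) - ε / 2 * n) := hlt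
        _ = (2:ℝ) ^ (-Real.logb 2 ((G n).card : ℝ)) * (2:ℝ) ^ (-(ε / 2) * (n:ℝ)) := by
            rw [← Real.rpow_add two_pos]; ring_nf
        _ = ((G n).card : ℝ)⁻¹ * (2:ℝ) ^ (-(ε / 2) * (n:ℝ)) := by
            rw [Real.rpow_neg (by norm_num), Real.rpow_logb two_pos (by norm_num) hcard]
    calc C n ≤ ∑ _y ∈ (G n).filter (fun y => 0 < P n y ∧ g n + ε / 2 < l n y),
          ((G n).card : ℝ)⁻¹ * (2:ℝ) ^ (-(ε / 2) * (n:ℝ)) := sum_le_sum hpt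
      _ = (((G n).filter (fun y => 0 < P n y ∧ g n + ε / 2 < l n y)).card : ℝ) *
          (((G n).card : ℝ)⁻¹ * (2:ℝ) ^ (-(ε / 2) * (n:ℝ))) := by
            rw [sum_const, nsmul_eq_mul]
      _ ≤ ((G n).card : ℝ) * (((G n).card : ℝ)⁻¹ * (2:ℝ) ^ (-(ε / 2) * (n:ℝ))) := by
            apply mul_le_mul_of_nonneg_right
            · exact_mod_cast card_le_card (filter_subset _ _)
            · positivity
      _ = (2:ℝ) ^ (-(ε / 2) * (n:ℝ)) := by
            rw [← mul_assoc, mul_inv_cancel₀ (ne_of_gt hcard), one_mul]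
  -- C tends to 0
  have hCtend : Tendsto C atTop (nhds 0) := by
    have hr : Tendsto (fun n : ℕ => (2:ℝ) ^ (-(ε / 2) * (n:ℝ))) atTop (nhds 0) := by
      have heq : ∀ n : ℕ, (2:ℝ) ^ (-(ε / 2) * (n:ℝ)) = ((2:ℝ) ^ (-(ε / 2)))^n := by
        intro n
        rw [← Real.rpow_natCast ((2:ℝ) ^ (-(ε / 2))) n, ← Real.rpow_mul (by norm_num)]
      simp only [heq]
      apply tendsto_pow_atTop_nhds_zero_of_lt_one
      · positivity
      · exact Real.rpow_lt_one_of_one_lt_of_neg one_lt_two (by linarith)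
    apply squeeze_zero' (Eventually.of_forall hCnn) ?_ hr
    filter_upwards [eventually_ge_atTop 1] with n hn using hCbd n hn
  have hBtend : Tendsto B atTop (nhds 0) := hUEP (ε / 2) (by linarith)
  -- final squeeze
  have hlim : Tendsto (fun n => 1 - (B n + C n) / pG) atTop (nhds 1) := by
    have := ((hBtend.add hCtend).div_const pG)
    have h2 := (tendsto_const_nhds (x := (1:ℝ)) (f := atTop)).sub this
    simpa using h2
  apply tendsto_of_tendsto_of_tendsto_of_le_of_le' hlim tendsto_const_nhds
  · apply Eventually.of_forall
    intro n
    show 1 - (B n + C n) / pG ≤ A n / S n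
    have hSn := hSpos n
    have h1 : (B n + C n) / S n ≤ (B n + C n) / pG :=
      div_le_div_of_nonneg_left (by linarith [hBnn n, hCnn n]) hpG (hPG n)
    have h2 : (S n - (B n + C n)) / S n ≤ A n / S n := by
      apply div_le_div_of_nonneg_right ?_ hSn.le
      · linarith [hmain n]
    have h3 : (S n - (B n + C n)) / S n = 1 - (B n + C n) / S n := by
      rw [sub_div, div_self (ne_of_gt hSn)]
    linarith
  · apply Eventually.of_forall
    intro n
    show A n / S n ≤ 1
    exact (div_le_one (hSpos n)).mpr (hAS n)
end
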